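/- Let p be a prime and A ⊆ F_p. Then |A +̇ A| ≥ min{p, 2|A| - 3}, where A +̇ A = {a + b : a, b ∈ A, a ≠ b}. -/

import Mathlib

open Polynomial Finset

lemma eh_weight_pow_sum {F : Type*} [Field F] [DecidableEq F] (s : Finset F) (hs : s.Nonempty)
    {i : ℕ} (hi : i ≤ s.card - 1) :
    ∑ a ∈ s, (∏ b ∈ s.erase a, (a - b)⁻¹) * a ^ i = if i = s.card - 1 then 1 else 0 := by
  have hinj : Set.InjOn (id : F → F) s := Function.injective_id.injOn
  have hcard : 1 ≤ s.card := Finset.Nonempty.card_pos hs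
  have hdeg : (X ^ i : F[X]).degree < s.card := by
    rw [Polynomial.degree_X_pow]
    exact_mod_cast (by omega : i < s.card)
  have hrep := Lagrange.eq_interpolate (f := (X ^ i : F[X])) hinj hdeg
  have hco := congrArg (fun q : F[X] => q.coeff (s.card - 1)) hrep
  simp only [Lagrange.interpolate_apply, Polynomial.finset_sum_coeff,
    Polynomial.coeff_X_pow] at hco
  have hbasis : ∀ a ∈ s, (Lagrange.basis s id a).coeff (s.card - 1)
      = ∏ b ∈ s.erase a, (a - b)⁻¹ := by
    intro a ha
    have h1 : Lagrange.basis s id a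
        = C (Lagrange.nodalWeight s id a) * Lagrange.nodal (s.erase a) id := by
      rw [Lagrange.basis_eq_prod_sub_inv_mul_nodal_div ha,
        ← Lagrange.nodal_erase_eq_nodal_div ha]
    have h2 : (Lagrange.nodal (s.erase a) id).natDegree = s.card - 1 := by
      rw [Lagrange.natDegree_nodal, Finset.card_erase_of_mem ha]
    rw [h1, Polynomial.coeff_C_mul, ← h2,
      (Lagrange.nodal_monic).coeff_natDegree, mul_one]
    rfl
  calc ∑ a ∈ s, (∏ b ∈ s.erase a, (a - b)⁻¹) * a ^ i
      = ∑ b ∈ s, (C (eval (id b) (X ^ i)) * Lagrange.basis s id b).coeff (s.card - 1) := by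
        refine Finset.sum_congr rfl fun a ha => ?_
        rw [Polynomial.coeff_C_mul, hbasis a ha]; simp [mul_comm]
    _ = if s.card - 1 = i then 1 else 0 := hco.symm
    _ = if i = s.card - 1 then 1 else 0 := by simp [eq_comm]

lemma eh_grid {F : Type*} [CommRing F] (A B : Finset F) (c : F) (x y x' y' : F → F) :
    ∑ a ∈ A, ∑ b ∈ B, c * (x a * y b - x' a * y' b)
      = c * ((∑ a ∈ A, x a) * (∑ b ∈ B, y b) - (∑ a ∈ A, x' a) * (∑ b ∈ B, y' b)) := by
  rw [Finset.sum_mul_sum, Finset.sum_mul_sum, mul_sub, Finset.mul_sum, Finset.mul_sum,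
    ← Finset.sum_sub_distrib]
  refine Finset.sum_congr rfl fun a _ => ?_
  rw [Finset.mul_sum, Finset.mul_sum, ← Finset.sum_sub_distrib]
  exact Finset.sum_congr rfl fun b _ => by ring

lemma eh_main (p : ℕ) (hp : p.Prime) (A B : Finset (ZMod p))
    (hl2 : 2 ≤ B.card) (hlk : B.card < A.card) (hkl : A.card + B.card - 2 ≤ p) :
    A.card + B.card - 2 ≤ (((A ×ˢ B).filter fun x => x.1 ≠ x.2).image fun x => x.1 + x.2).card := by
  haveI : Fact p.Prime := ⟨hp⟩
  haveI : NeZero p := ⟨hp.pos.ne'⟩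
  set k := A.card with hk
  set l := B.card with hl
  set Cs := (((A ×ˢ B).filter fun x => x.1 ≠ x.2).image fun x => x.1 + x.2) with hCs
  by_contra hcon
  push_neg at hcon
  set n := k + l - 3 with hn
  have hkp : k ≤ p := by
    rw [hk]
    simpa [ZMod.card] using Finset.card_le_univ A
  obtain ⟨C', hCC', hC'card⟩ : ∃ C', Cs ⊆ C' ∧ C'.card = n :=
    Finset.exists_superset_card_eq (by omega) (by rw [ZMod.card]; omega)
  set g := Lagrange.nodal C' (id : ZMod p → ZMod p) with hg
  have hgdeg : g.natDegree = n := by rw [hg, Lagrange.natDegree_nodal, hC'card]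
  set w : ZMod p → ZMod p := fun a => ∏ b ∈ A.erase a, (a - b)⁻¹ with hw
  set v : ZMod p → ZMod p := fun a => ∏ b ∈ B.erase a, (a - b)⁻¹ with hv
  set W : ℕ → ZMod p := fun i => ∑ a ∈ A, w a * a ^ i with hW
  set V : ℕ → ZMod p := fun i => ∑ b ∈ B, v b * b ^ i with hV
  have hWe : ∀ s ≤ k - 1, W s = if s = k - 1 then 1 else 0 := fun s hs =>
    eh_weight_pow_sum A (Finset.card_pos.mp (show 0 < A.card by omega)) hs
  have hVe : ∀ s ≤ l - 1, V s = if s = l - 1 then 1 else 0 := fun s hs =>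
    eh_weight_pow_sum B (Finset.card_pos.mp (show 0 < B.card by omega)) hs
  have hWV : ∀ s t : ℕ, s + t ≤ k + l - 2 →
      W s * V t = if s = k - 1 ∧ t = l - 1 then 1 else 0 := by
    intro s t hst
    by_cases hs : s ≤ k - 1
    · by_cases ht : t ≤ l - 1
      · rw [hWe s hs, hVe t ht]
        by_cases h1 : s = k - 1 <;> by_cases h2 : t = l - 1 <;> simp [h1, h2]
      · rw [hWe s hs, if_neg (by omega : ¬ s = k - 1), zero_mul,
          if_neg (fun h => by omega)]
    · rw [hVe t (by omega), if_neg (by omega : ¬ t = l - 1), mul_zero,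
        if_neg (fun h => by omega)]
  set S := ∑ a ∈ A, ∑ b ∈ B, w a * v b * ((a - b) * g.eval (a + b)) with hS
  have hS0 : S = 0 := by
    refine Finset.sum_eq_zero fun a ha => Finset.sum_eq_zero fun b hb => ?_
    by_cases hab : a = b
    · simp [hab]
    · have hmem : a + b ∈ C' := hCC' (Finset.mem_image.mpr
        ⟨(a, b), Finset.mem_filter.mpr ⟨Finset.mem_product.mpr ⟨ha, hb⟩, hab⟩, rfl⟩)
      rw [hg, show eval (a + b) (Lagrange.nodal C' id) = 0 from
        Lagrange.eval_nodal_at_node (v := id) hmem, mul_zero, mul_zero]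
  have hSsplit : S = ∑ m ∈ Finset.range (n + 1), g.coeff m *
      ∑ a ∈ A, ∑ b ∈ B, w a * v b * ((a - b) * (a + b) ^ m) := by
    have heval : ∀ x : ZMod p, g.eval x = ∑ m ∈ Finset.range (n + 1), g.coeff m * x ^ m := by
      intro x
      have := Polynomial.eval_eq_sum_range (p := g) x
      rwa [hgdeg] at this
    calc S = ∑ a ∈ A, ∑ b ∈ B, ∑ m ∈ Finset.range (n + 1),
          g.coeff m * (w a * v b * ((a - b) * (a + b) ^ m)) := by
          refine Finset.sum_congr rfl fun a _ => Finset.sum_congr rfl fun b _ => ?_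
          rw [heval, Finset.mul_sum, Finset.mul_sum]
          exact Finset.sum_congr rfl fun m _ => by ring
      _ = ∑ m ∈ Finset.range (n + 1), ∑ a ∈ A, ∑ b ∈ B,
          g.coeff m * (w a * v b * ((a - b) * (a + b) ^ m)) := by
          rw [Finset.sum_congr rfl fun a (_ : a ∈ A) => Finset.sum_comm, Finset.sum_comm]
      _ = _ := by
          refine Finset.sum_congr rfl fun m _ => ?_
          rw [Finset.mul_sum]
          exact Finset.sum_congr rfl fun a _ => by rw [Finset.mul_sum]
  have hinner : ∀ m, ∑ a ∈ A, ∑ b ∈ B, w a * v b * ((a - b) * (a + b) ^ m)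
      = ∑ i ∈ Finset.range (m + 1), (m.choose i : ZMod p) *
          (W (i + 1) * V (m - i) - W i * V (m - i + 1)) := by
    intro m
    calc ∑ a ∈ A, ∑ b ∈ B, w a * v b * ((a - b) * (a + b) ^ m)
        = ∑ a ∈ A, ∑ b ∈ B, ∑ i ∈ Finset.range (m + 1), (m.choose i : ZMod p) *
            ((w a * a ^ (i + 1)) * (v b * b ^ (m - i))
              - (w a * a ^ i) * (v b * b ^ (m - i + 1))) := by
          refine Finset.sum_congr rfl fun a _ => Finset.sum_congr rfl fun b _ => ?_
          rw [add_pow, Finset.mul_sum, Finset.mul_sum]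
          exact Finset.sum_congr rfl fun i _ => by ring
      _ = ∑ i ∈ Finset.range (m + 1), ∑ a ∈ A, ∑ b ∈ B, (m.choose i : ZMod p) *
            ((w a * a ^ (i + 1)) * (v b * b ^ (m - i))
              - (w a * a ^ i) * (v b * b ^ (m - i + 1))) := by
          rw [Finset.sum_congr rfl fun a (_ : a ∈ A) => Finset.sum_comm, Finset.sum_comm]
      _ = _ := by
          refine Finset.sum_congr rfl fun i _ => ?_
          rw [eh_grid]
  have hD : S = (n.choose (k - 2) : ZMod p) - (n.choose (k - 1) : ZMod p) := by
    rw [hSsplit]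
    have hT : ∀ m ∈ Finset.range (n + 1),
        (∑ a ∈ A, ∑ b ∈ B, w a * v b * ((a - b) * (a + b) ^ m))
          = if m = n then (n.choose (k - 2) : ZMod p) - (n.choose (k - 1) : ZMod p) else 0 := by
      intro m hm
      rw [Finset.mem_range] at hm
      rw [hinner m]
      have hterm : ∀ i ∈ Finset.range (m + 1), (m.choose i : ZMod p) *
          (W (i + 1) * V (m - i) - W i * V (m - i + 1))
          = (if i = k - 2 ∧ m = n then (m.choose i : ZMod p) else 0)
            - (if i = k - 1 ∧ m = n then (m.choose i : ZMod p) else 0) := by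
        intro i hi
        rw [Finset.mem_range] at hi
        rw [hWV (i + 1) (m - i) (by omega), hWV i (m - i + 1) (by omega)]
        have e1 : (i + 1 = k - 1 ∧ m - i = l - 1) ↔ (i = k - 2 ∧ m = n) := by omega
        have e2 : (i = k - 1 ∧ m - i + 1 = l - 1) ↔ (i = k - 1 ∧ m = n) := by omega
        rw [if_congr e1 rfl rfl, if_congr e2 rfl rfl]
        split_ifs with h1 h2 h2 <;> ring
      rw [Finset.sum_congr rfl hterm, Finset.sum_sub_distrib]
      by_cases hmn : m = n
      · rw [if_pos hmn]
        simp only [hmn, and_true]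
        rw [Finset.sum_ite_eq' (Finset.range (n + 1)) (k - 2)
            (fun i => (n.choose i : ZMod p)),
          Finset.sum_ite_eq' (Finset.range (n + 1)) (k - 1)
            (fun i => (n.choose i : ZMod p)),
          if_pos (Finset.mem_range.mpr (by omega)),
          if_pos (Finset.mem_range.mpr (by omega))]
      · simp [hmn]
    rw [Finset.sum_congr rfl fun m hm => by rw [hT m hm]]
    rw [Finset.sum_eq_single_of_mem n (Finset.mem_range.mpr (by omega))
      (fun m _ hne => by rw [if_neg hne, mul_zero]), if_pos rfl]
    have hgn : g.coeff n = 1 := by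
      rw [← hgdeg]; exact (Lagrange.nodal_monic).coeff_natDegree
    rw [hgn, one_mul]
  -- nonvanishing of the binomial difference
  have h1 := Nat.choose_mul_factorial_mul_factorial (show k - 2 ≤ n by omega) (n := n)
  have h2 := Nat.choose_mul_factorial_mul_factorial (show k - 1 ≤ n by omega) (n := n)
  rw [show n - (k - 2) = l - 1 by omega] at h1
  rw [show n - (k - 1) = l - 2 by omega] at h2
  have e1 : (k - 1).factorial * (l - 1).factorial * (n.choose (k - 2))
      = (k - 1) * n.factorial := by
    rw [show k - 1 = (k - 2) + 1 by omega, Nat.factorial_succ, ← h1]; ring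
  have e2 : (k - 1).factorial * (l - 1).factorial * (n.choose (k - 1))
      = (l - 1) * n.factorial := by
    rw [show l - 1 = (l - 2) + 1 by omega, Nat.factorial_succ, ← h2]; ring
  have hD0 : (n.choose (k - 2) : ZMod p) - (n.choose (k - 1) : ZMod p) = 0 := by
    rw [← hD, hS0]
  have hmul : ((k - 1).factorial : ZMod p) * ((l - 1).factorial : ZMod p) *
      ((n.choose (k - 2) : ZMod p) - (n.choose (k - 1) : ZMod p))
      = ((k - l : ℕ) : ZMod p) * (n.factorial : ZMod p) := by
    rw [mul_sub, ← Nat.cast_mul, ← Nat.cast_mul, ← Nat.cast_mul, ← Nat.cast_mul, e1, e2,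
      Nat.cast_mul, Nat.cast_mul, ← sub_mul, ← Nat.cast_sub (by omega : l - 1 ≤ k - 1),
      show k - 1 - (l - 1) = k - l by omega]
    exact (Nat.cast_mul _ _).symm
  rw [hD0, mul_zero] at hmul
  have hne : ((k - l : ℕ) : ZMod p) * (n.factorial : ZMod p) ≠ 0 := by
    refine mul_ne_zero ?_ ?_
    · rw [Ne, ZMod.natCast_eq_zero_iff]
      exact Nat.not_dvd_of_pos_of_lt (by omega) (by omega)
    · rw [Ne, ZMod.natCast_eq_zero_iff]
      intro hdvd
      have := (Nat.Prime.dvd_factorial hp).mp hdvd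
      omega
  exact hne hmul.symm

lemma eh_wrap (p : ℕ) (hp : p.Prime) (A B : Finset (ZMod p))
    (hl2 : 2 ≤ B.card) (hlk : B.card < A.card) :
    min p (A.card + B.card - 2) ≤
      (((A ×ˢ B).filter fun x => x.1 ≠ x.2).image fun x => x.1 + x.2).card := by
  haveI : NeZero p := ⟨hp.pos.ne'⟩
  by_cases hle : A.card + B.card - 2 ≤ p
  · rw [min_eq_right hle]
    exact eh_main p hp A B hl2 hlk hle
  · push_neg at hle
    have hkp : A.card ≤ p := by simpa [ZMod.card] using Finset.card_le_univ A
    obtain ⟨B', hB'B, hB'card⟩ : ∃ B' ⊆ B, B'.card = p + 2 - A.card :=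
      Finset.exists_subset_card_eq (by omega)
    have hmain := eh_main p hp A B' (by omega) (by omega) (by omega)
    rw [hB'card, show A.card + (p + 2 - A.card) - 2 = p by omega] at hmain
    refine le_trans (min_le_left _ _) (le_trans hmain (Finset.card_le_card ?_))
    exact Finset.image_subset_image (Finset.filter_subset_filter _
      (Finset.product_subset_product (Finset.Subset.refl A) hB'B))

theorem erdos_heilbronn (p : ℕ) (hp : p.Prime) (A : Finset (ZMod p)) :
    min p (2 * A.card - 3) ≤
      (((A ×ˢ A).filter fun x => x.1 ≠ x.2).image fun x => x.1 + x.2).card := by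
  rcases le_or_gt A.card 1 with h1 | h1
  · rw [show 2 * A.card - 3 = 0 by omega, Nat.min_zero]
    exact Nat.zero_le _
  rcases eq_or_lt_of_le (Nat.succ_le_of_lt h1) with h2 | h2
  · -- A.card = 2
    obtain ⟨a, ha, b, hb, hab⟩ := Finset.one_lt_card.mp h1
    have hmem : a + b ∈ ((A ×ˢ A).filter fun x => x.1 ≠ x.2).image fun x => x.1 + x.2 :=
      Finset.mem_image.mpr ⟨(a, b), Finset.mem_filter.mpr
        ⟨Finset.mem_product.mpr ⟨ha, hb⟩, hab⟩, rfl⟩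
    have : 1 ≤ (((A ×ˢ A).filter fun x => x.1 ≠ x.2).image fun x => x.1 + x.2).card :=
      Finset.card_pos.mpr ⟨a + b, hmem⟩
    refine le_trans ?_ this
    rw [show 2 * A.card - 3 = 1 by omega]
    exact min_le_right _ _
  · -- A.card ≥ 3
    obtain ⟨a₀, ha₀⟩ := Finset.card_pos.mp (show 0 < A.card by omega)
    have hB : (A.erase a₀).card = A.card - 1 := Finset.card_erase_of_mem ha₀
    have := eh_wrap p hp A (A.erase a₀) (by omega) (by omega)
    rw [hB, show A.card + (A.card - 1) - 2 = 2 * A.card - 3 by omega] at this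
    refine le_trans this (Finset.card_le_card ?_)
    exact Finset.image_subset_image (Finset.filter_subset_filter _
      (Finset.product_subset_product (Finset.Subset.refl A) (Finset.erase_subset _ _)))
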